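/- Let L_1, ..., L_k be root subspaces of H_n such that every pairwise intersection L_s ∩ L_t is a root subspace. Then the full intersection L_1 ∩ ... ∩ L_k is a root subspace. -/

import Mathlib

/-- The root `e_i - e_j` in `ℝ^n`. -/
def rootVec (n : ℕ) (i j : Fin n) : Fin n → ℝ :=
  Pi.single i 1 - Pi.single j 1

/-- A root subspace: a linear subspace spanned by a set of roots `e_i - e_j`. -/
def IsRootSubspace {n : ℕ} (L : Submodule ℝ (Fin n → ℝ)) : Prop :=
  ∃ A : Set (Fin n → ℝ),
    (∀ v ∈ A, ∃ i j : Fin n, i ≠ j ∧ v = rootVec n i j) ∧ L = Submodule.span ℝ A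

namespace RootAux

variable {n : ℕ}

/-- relatedness: `i = j` or the root `e_i - e_j` lies in `V`. -/
def Rel (V : Submodule ℝ (Fin n → ℝ)) (i j : Fin n) : Prop :=
  i = j ∨ rootVec n i j ∈ V

lemma rel_refl (V : Submodule ℝ (Fin n → ℝ)) (i : Fin n) : Rel V i i := Or.inl rfl

lemma rootVec_neg (i j : Fin n) : rootVec n j i = -rootVec n i j := by
  simp [rootVec, neg_sub]

lemma rootVec_add (i j k : Fin n) : rootVec n i j + rootVec n j k = rootVec n i k := by
  unfold rootVec; abel

lemma rel_symm {V : Submodule ℝ (Fin n → ℝ)} {i j : Fin n} (h : Rel V i j) : Rel V j i := by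
  rcases h with h | h
  · exact Or.inl h.symm
  · exact Or.inr (by rw [rootVec_neg]; exact V.neg_mem h)

lemma rel_trans {V : Submodule ℝ (Fin n → ℝ)} {i j k : Fin n}
    (h1 : Rel V i j) (h2 : Rel V j k) : Rel V i k := by
  rcases h1 with h1 | h1
  · subst h1; exact h2
  · rcases h2 with h2 | h2
    · subst h2; exact Or.inr h1
    · exact Or.inr (by rw [← rootVec_add i j k]; exact V.add_mem h1 h2)

open Classical in
/-- Sum of the coordinates of `x` over the `Rel V`-class of `j`. -/
noncomputable def classSum (V : Submodule ℝ (Fin n → ℝ)) (x : Fin n → ℝ) (j : Fin n) : ℝ :=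
  ∑ i : Fin n, if Rel V i j then x i else 0

lemma classSum_eq_zero_of_mem {V : Submodule ℝ (Fin n → ℝ)} (hV : IsRootSubspace V)
    {x : Fin n → ℝ} (hx : x ∈ V) (j : Fin n) : classSum V x j = 0 := by
  classical
  obtain ⟨A, hA, rfl⟩ := hV
  induction hx using Submodule.span_induction with
  | mem v hv =>
      obtain ⟨a, b, hab, rfl⟩ := hA v hv
      have hmemV : rootVec n a b ∈ Submodule.span ℝ A := Submodule.subset_span hv
      have hrel : Rel (Submodule.span ℝ A) a b := Or.inr hmemV
      have hiff : Rel (Submodule.span ℝ A) a j ↔ Rel (Submodule.span ℝ A) b j :=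
        ⟨fun h => rel_trans (rel_symm hrel) h, fun h => rel_trans hrel h⟩
      unfold classSum
      have h1 : ∀ i : Fin n, (if Rel (Submodule.span ℝ A) i j then rootVec n a b i else 0)
          = (if i = a ∧ Rel (Submodule.span ℝ A) a j then (1:ℝ) else 0)
            - (if i = b ∧ Rel (Submodule.span ℝ A) b j then (1:ℝ) else 0) := by
        intro i
        by_cases hia : i = a <;> by_cases hib : i = b <;>
          simp [rootVec, Pi.single_apply, hia, hib] <;> subst_vars <;>
          simp_all <;> split <;> simp_all
      rw [Finset.sum_congr rfl (fun i _ => h1 i), Finset.sum_sub_distrib]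
      have h2 : ∀ (c : Fin n) (P : Prop) (_ : Decidable P),
          (∑ i : Fin n, if i = c ∧ P then (1:ℝ) else 0) = if P then 1 else 0 := by
        intro c P hP
        by_cases hp : P <;> simp [hp]
      rw [h2, h2]
      by_cases hbj : Rel (Submodule.span ℝ A) b j
      · rw [if_pos hbj, if_pos (hiff.mpr hbj), sub_self]
      · rw [if_neg hbj, if_neg (fun h => hbj (hiff.mp h)), sub_self]
  | zero => simp [classSum]
  | add y z hy hz ihy ihz =>
      have : classSum (Submodule.span ℝ A) (y + z) j
          = classSum (Submodule.span ℝ A) y j + classSum (Submodule.span ℝ A) z j := by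
        unfold classSum
        rw [← Finset.sum_add_distrib]
        refine Finset.sum_congr rfl fun i _ => ?_
        split <;> simp
      rw [this, ihy, ihz, add_zero]
  | smul c y hy ihy =>
      have : classSum (Submodule.span ℝ A) (c • y) j
          = c * classSum (Submodule.span ℝ A) y j := by
        unfold classSum
        rw [Finset.mul_sum]
        refine Finset.sum_congr rfl fun i _ => ?_
        split <;> simp
      rw [this, ihy, mul_zero]

/-- The set of roots lying in `V`. -/
def rootSet (V : Submodule ℝ (Fin n → ℝ)) : Set (Fin n → ℝ) :=
  {v | ∃ i j : Fin n, i ≠ j ∧ rootVec n i j ∈ V ∧ v = rootVec n i j}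

lemma rootSet_spec (V : Submodule ℝ (Fin n → ℝ)) :
    ∀ v ∈ rootSet V, ∃ i j : Fin n, i ≠ j ∧ v = rootVec n i j := by
  rintro v ⟨i, j, hij, _, rfl⟩; exact ⟨i, j, hij, rfl⟩

lemma span_rootSet_le (V : Submodule ℝ (Fin n → ℝ)) :
    Submodule.span ℝ (rootSet V) ≤ V := by
  rw [Submodule.span_le]; rintro v ⟨i, j, hij, hv, rfl⟩; exact hv

open Classical in
lemma mem_span_rootSet {V : Submodule ℝ (Fin n → ℝ)} {x : Fin n → ℝ}
    (h : ∀ j, classSum V x j = 0) : x ∈ Submodule.span ℝ (rootSet V) := by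
  classical
  -- representative of each class
  set r : Fin n → Fin n := fun j => (Finset.univ.filter (fun i => Rel V i j)).min'
    ⟨j, by simp [rel_refl]⟩ with hr
  have hrel_r : ∀ j, Rel V (r j) j := by
    intro j
    have := Finset.min'_mem (Finset.univ.filter (fun i => Rel V i j))
      ⟨j, by simp [rel_refl]⟩
    simpa using this
  have hr_eq : ∀ {i j}, Rel V i j → r i = r j := by
    intro i j hij
    have : (Finset.univ.filter (fun a => Rel V a i)) =
        (Finset.univ.filter (fun a => Rel V a j)) := by
      ext a
      simp only [Finset.mem_filter, Finset.mem_univ, true_and]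
      exact ⟨fun h => rel_trans h hij, fun h => rel_trans h (rel_symm hij)⟩
    simp [hr, this]
  have key : ∀ m : Fin n, ∑ i : Fin n, (if r i = m then x i else 0) = 0 := by
    intro m
    by_cases hm : ∃ i₀, r i₀ = m
    · obtain ⟨i₀, hi₀⟩ := hm
      have hrm : r m = m := by
        rw [← hi₀]; exact hr_eq (hrel_r i₀)
      have hcond : ∀ i, (r i = m) ↔ Rel V i m := by
        intro i
        constructor
        · intro hi
          rw [← hi]; exact rel_symm (hrel_r i)
        · intro hi; rw [hr_eq hi, hrm]
      have h0 := h m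
      unfold classSum at h0
      have hcg : (∑ i : Fin n, if r i = m then x i else 0)
          = ∑ i : Fin n, if Rel V i m then x i else 0 :=
        Finset.sum_congr rfl fun i _ => if_congr (hcond i) rfl rfl
      rw [hcg]; exact h0
    · push_neg at hm
      refine Finset.sum_eq_zero fun i _ => ?_
      simp [hm i]
  have hxeq : x = ∑ i : Fin n, x i • rootVec n i (r i) := by
    funext m
    rw [Finset.sum_apply]
    have : ∀ i : Fin n, (x i • rootVec n i (r i)) m
        = (if m = i then x i else 0) - (if r i = m then x i else 0) := by
      intro i
      simp only [rootVec, Pi.smul_apply, Pi.sub_apply, Pi.single_apply, smul_eq_mul,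
        mul_sub]
      congr 1 <;> split <;> simp_all <;> intro hc <;> exact absurd hc.symm ‹_›
    rw [Finset.sum_congr rfl fun i _ => this i, Finset.sum_sub_distrib, key m]
    simp
  rw [hxeq]
  refine Submodule.sum_mem _ fun i _ => ?_
  by_cases hi : i = r i
  · have : rootVec n i (r i) = 0 := by rw [← hi, rootVec, sub_self]
    rw [this, smul_zero]; exact Submodule.zero_mem _
  · refine Submodule.smul_mem _ _ (Submodule.subset_span ?_)
    refine ⟨i, r i, hi, ?_, rfl⟩
    rcases rel_symm (hrel_r i) with h | h
    · exact absurd h hi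
    · exact h

open Classical in
lemma rel_iInf {k : ℕ} (L : Fin k → Submodule ℝ (Fin n → ℝ)) (i j : Fin n) :
    Rel (⨅ s, L s) i j ↔ ∀ s, Rel (L s) i j := by
  by_cases hij : i = j
  · subst hij; simp [rel_refl]
  · constructor
    · rintro (h | h)
      · exact absurd h hij
      · intro s; exact Or.inr (Submodule.mem_iInf _ |>.mp h s)
    · intro h
      refine Or.inr (Submodule.mem_iInf _ |>.mpr fun s => ?_)
      rcases h s with h' | h'
      · exact absurd h' hij
      · exact h'

open Classical in
lemma aux : ∀ (k : ℕ) (L : Fin (k + 1) → Submodule ℝ (Fin n → ℝ)),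
    (∀ s, IsRootSubspace (L s)) → (∀ s t, IsRootSubspace (L s ⊓ L t)) →
    ∀ x ∈ (⨅ s, L s), ∀ j, classSum (⨅ s, L s) x j = 0 := by
  intro k
  induction k with
  | zero =>
      intro L hL _ x hx j
      have hL0 : (⨅ s, L s) = L 0 := by
        refine le_antisymm (iInf_le _ 0) (le_iInf fun s => ?_)
        exact le_of_eq (congrArg L (Fin.fin_one_eq_zero s).symm)
      rw [hL0] at hx ⊢
      exact classSum_eq_zero_of_mem (hL 0) hx j
  | succ k ih =>
      intro L hL hpair x hx j
      set t : Fin (k + 2) := Fin.last (k + 1) with ht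
      set y : Fin n → ℝ := fun i => if Rel (L t) i j then x i else 0 with hy
      set L' : Fin (k + 1) → Submodule ℝ (Fin n → ℝ) := fun s => L s.castSucc with hL'
      -- y lies in each L' s
      have hxs : ∀ s : Fin (k + 2), x ∈ L s := Submodule.mem_iInf _ |>.mp hx
      have hyclass : ∀ (s : Fin (k + 1)) (p : Fin n), classSum (L' s) y p = 0 := by
        intro s p
        unfold classSum
        have hterm : ∀ i : Fin n, (if Rel (L' s) i p then y i else 0)
            = if Rel (L' s) i p ∧ Rel (L t) i j then x i else 0 := by
          intro i
          simp only [hy]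
          by_cases h1 : Rel (L' s) i p <;> by_cases h2 : Rel (L t) i j <;>
            simp [h1, h2]
        rw [Finset.sum_congr rfl fun i _ => hterm i]
        by_cases hne : ∃ i₀, Rel (L' s) i₀ p ∧ Rel (L t) i₀ j
        · obtain ⟨i₀, h₀p, h₀j⟩ := hne
          have hcond : ∀ i, (Rel (L' s) i p ∧ Rel (L t) i j) ↔ Rel (L' s ⊓ L t) i i₀ := by
            intro i
            constructor
            · rintro ⟨ha, hb⟩
              by_cases hii : i = i₀
              · exact Or.inl hii
              · refine Or.inr (Submodule.mem_inf.mpr ⟨?_, ?_⟩)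
                · rcases rel_trans ha (rel_symm h₀p) with h | h
                  · exact absurd h hii
                  · exact h
                · rcases rel_trans hb (rel_symm h₀j) with h | h
                  · exact absurd h hii
                  · exact h
            · intro hmem
              have ha : Rel (L' s) i i₀ := by
                rcases hmem with h | h
                · exact Or.inl h
                · exact Or.inr (Submodule.mem_inf.mp h).1
              have hb : Rel (L t) i i₀ := by
                rcases hmem with h | h
                · exact Or.inl h
                · exact Or.inr (Submodule.mem_inf.mp h).2
              exact ⟨rel_trans ha h₀p, rel_trans hb h₀j⟩
          have hx' : x ∈ L' s ⊓ L t := Submodule.mem_inf.mpr ⟨hxs _, hxs _⟩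
          have h0 := classSum_eq_zero_of_mem (hpair s.castSucc t) hx' i₀
          unfold classSum at h0
          rw [Finset.sum_congr rfl fun i _ => if_congr (hcond i) rfl rfl]
          exact h0
        · push_neg at hne
          refine Finset.sum_eq_zero fun i _ => ?_
          by_cases h1 : Rel (L' s) i p
          · simp [h1, hne i h1]
          · simp [h1]
      have hymem : y ∈ ⨅ s, L' s := by
        refine Submodule.mem_iInf _ |>.mpr fun s => ?_
        exact span_rootSet_le (L' s) (mem_span_rootSet (hyclass s))
      have ihy := ih L' (fun s => hL _) (fun s u => hpair _ _) y hymem j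
      unfold classSum at ihy ⊢
      have hiff : ∀ i, Rel (⨅ s, L s) i j ↔ (Rel (⨅ s, L' s) i j ∧ Rel (L t) i j) := by
        intro i
        rw [rel_iInf, rel_iInf]
        constructor
        · intro h; exact ⟨fun s => h _, h _⟩
        · rintro ⟨h1, h2⟩ s
          refine Fin.lastCases ?_ ?_ s
          · exact h2
          · intro s'; exact h1 s'
      have hcg : (∑ i : Fin n, if Rel (⨅ s, L s) i j then x i else 0)
          = ∑ i : Fin n, if Rel (⨅ s, L' s) i j then y i else 0 := by
        refine Finset.sum_congr rfl fun i _ => ?_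
        by_cases h1 : Rel (⨅ s, L' s) i j <;> by_cases h2 : Rel (L t) i j
        · rw [if_pos ((hiff i).mpr ⟨h1, h2⟩), if_pos h1]
          simp [hy, h2]
        · rw [if_neg (fun hc => h2 ((hiff i).mp hc).2), if_pos h1]
          simp [hy, h2]
        · rw [if_neg (fun hc => h1 ((hiff i).mp hc).1), if_neg h1]
        · rw [if_neg (fun hc => h1 ((hiff i).mp hc).1), if_neg h1]
      rw [hcg]; exact ihy

end RootAux

/-- If all pairwise intersections of the root subspaces `L 1, ..., L k` are root
subspaces, then so is the full intersection. -/
theorem stmt3 {n k : ℕ} (hk : 0 < k) (L : Fin k → Submodule ℝ (Fin n → ℝ))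
    (hL : ∀ s, IsRootSubspace (L s))
    (hpair : ∀ s t : Fin k, IsRootSubspace (L s ⊓ L t)) :
    IsRootSubspace (⨅ s, L s) := by
  classical
  obtain ⟨k', rfl⟩ : ∃ k', k = k' + 1 := ⟨k - 1, (Nat.succ_pred_eq_of_pos hk).symm⟩
  refine ⟨RootAux.rootSet (⨅ s, L s), RootAux.rootSet_spec _, ?_⟩
  refine le_antisymm ?_ (RootAux.span_rootSet_le _)
  intro x hx
  exact RootAux.mem_span_rootSet fun j => RootAux.aux k' L hL hpair x hx j
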